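/- Let $\varepsilon \in (0,1)$, $\lambda > 0$, $M > 0$. Let $f : [0,\infty) \to \mathbb{R}$ be a measurable function satisfying $|f(\tau)| \le M (1+\tau)^{-\lambda}$ for almost every $\tau \ge 0$. Then for every real $a \ge 1$ and every $t \ge 1$, $\int_0^{t/2} a^{1-\varepsilon} e^{-(t-\tau) a} |f(\tau)| \, d\tau \le M \big( 4(1-\varepsilon)/e \big)^{1-\varepsilon} e^{-1/4} \, 2^{\lambda} \, d_1(\lambda, 1/2) \, (1+t)^{-\lambda}$, where $d_1(\lambda,\sigma) = 2^{\lambda} \big[ ((\lambda+1)/(e\sigma))^{\lambda+1} e^{\sigma} + 1/\sigma \big]$. -/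

import Mathlib

open Real MeasureTheory intervalIntegral

lemma key_rpow_exp (s σ x : ℝ) (hs : 0 < s) (hσ : 0 < σ) (hx : 0 < x) :
    x ^ s * Real.exp (-(σ * x)) ≤ (s / (Real.exp 1 * σ)) ^ s := by
  have h1 : Real.log (σ * x / s) ≤ σ * x / s - 1 :=
    Real.log_le_sub_one_of_pos (by positivity)
  have h2 : Real.log (σ * x / s) = Real.log σ + Real.log x - Real.log s := by
    rw [Real.log_div (by positivity) hs.ne', Real.log_mul hσ.ne' hx.ne']
  have h3 : Real.log (s / (Real.exp 1 * σ)) = Real.log s - 1 - Real.log σ := by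
    rw [Real.log_div hs.ne' (by positivity), Real.log_mul (Real.exp_pos 1).ne' hσ.ne',
      Real.log_exp]
    ring
  rw [Real.rpow_def_of_pos hx, Real.rpow_def_of_pos (by positivity), ← Real.exp_add]
  apply Real.exp_le_exp.mpr
  rw [h3]
  have h4 := mul_le_mul_of_nonneg_left h1 hs.le
  rw [h2] at h4
  have hss : s * (σ * x / s - 1) = σ * x - s := by field_simp
  nlinarith [h4]

/-- Let `ε ∈ (0,1)`, `λ > 0`, `M > 0`, and `f` measurable with
`|f τ| ≤ M (1+τ)^{-λ}` for a.e. `τ ≥ 0`. Then for every `a ≥ 1` and every `t ≥ 1`,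
`∫_0^{t/2} a^{1-ε} e^{-(t-τ) a} |f τ| dτ
  ≤ M (4(1-ε)/e)^{1-ε} e^{-1/4} 2^λ d₁(λ,1/2) (1+t)^{-λ}`,
where `d₁(λ,σ) = 2^λ [ ((λ+1)/(e σ))^{λ+1} e^σ + 1/σ ]`. -/
theorem stmt6 (ε lam M : ℝ) (hε : ε ∈ Set.Ioo (0:ℝ) 1) (hlam : 0 < lam) (hM : 0 < M)
    (f : ℝ → ℝ) (hf : Measurable f)
    (hfb : ∀ᵐ τ ∂(volume : Measure ℝ), 0 ≤ τ → |f τ| ≤ M * (1 + τ) ^ (-lam)) :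
    ∀ a : ℝ, 1 ≤ a → ∀ t : ℝ, 1 ≤ t →
      (∫ τ in (0:ℝ)..(t/2), a ^ (1 - ε) * Real.exp (-((t - τ) * a)) * |f τ|)
        ≤ M * (4 * (1 - ε) / Real.exp 1) ^ (1 - ε) * Real.exp (-(1/4)) * (2:ℝ) ^ lam
            * ((2:ℝ) ^ lam * (((lam + 1) / (Real.exp 1 * (1/2))) ^ (lam + 1)
                * Real.exp (1/2) + 1 / (1/2)))
            * (1 + t) ^ (-lam) := by
  obtain ⟨hε0, hε1⟩ := hε
  intro a ha t ht
  set s : ℝ := 1 - ε with hs_def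
  have hs : 0 < s := by simp [hs_def]; linarith
  have ha0 : (0:ℝ) < a := lt_of_lt_of_le one_pos ha
  have ht0 : (0:ℝ) < t := lt_of_lt_of_le one_pos ht
  set C : ℝ := a ^ s * Real.exp (-(t/2 * a)) * M with hC_def
  have hC0 : 0 ≤ C := by positivity
  -- Step 1: the integral is at most (t/2) * C
  have step1 : (∫ τ in (0:ℝ)..(t/2), a ^ s * Real.exp (-((t - τ) * a)) * |f τ|)
      ≤ t/2 * C := by
    have hI : Set.uIoc (0:ℝ) (t/2) = Set.Ioc 0 (t/2) := Set.uIoc_of_le (by linarith)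
    have hbd : ∀ᵐ τ ∂(volume.restrict (Set.uIoc (0:ℝ) (t/2))),
        ‖a ^ s * Real.exp (-((t - τ) * a)) * |f τ|‖ ≤ C := by
      rw [hI]
      filter_upwards [ae_restrict_of_ae hfb,
        ae_restrict_mem measurableSet_Ioc] with τ hτf hτm
      obtain ⟨hτ0, hτt⟩ := hτm
      have hb1 : |f τ| ≤ M * (1 + τ) ^ (-lam) := hτf hτ0.le
      have hb2 : (1 + τ) ^ (-lam) ≤ 1 :=
        Real.rpow_le_one_of_one_le_of_nonpos (by linarith) (by linarith)
      have hfM : |f τ| ≤ M := by nlinarith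
      have hexp : Real.exp (-((t - τ) * a)) ≤ Real.exp (-(t/2 * a)) := by
        apply Real.exp_le_exp.mpr
        have : t/2 * a ≤ (t - τ) * a := by
          apply mul_le_mul_of_nonneg_right (by linarith) ha0.le
        linarith
      have h1 : ‖a ^ s * Real.exp (-((t - τ) * a)) * |f τ|‖
          = a ^ s * Real.exp (-((t - τ) * a)) * |f τ| := by
        apply abs_of_nonneg; positivity
      rw [h1, hC_def]
      have hA : (0:ℝ) ≤ a ^ s := by positivity
      calc a ^ s * Real.exp (-((t - τ) * a)) * |f τ|
          ≤ a ^ s * Real.exp (-(t/2 * a)) * |f τ| := by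
            apply mul_le_mul_of_nonneg_right _ (abs_nonneg _)
            exact mul_le_mul_of_nonneg_left hexp hA
        _ ≤ a ^ s * Real.exp (-(t/2 * a)) * M := by
            apply mul_le_mul_of_nonneg_left hfM (by positivity)
    have := intervalIntegral.norm_integral_le_abs_of_norm_le (g := fun _ => C)
      hbd (intervalIntegrable_const)
    rw [intervalIntegral.integral_const] at this
    have h2 : |(t/2 - 0) • C| = t/2 * C := by
      rw [smul_eq_mul, sub_zero, abs_of_nonneg (by positivity)]
    rw [h2] at this
    calc (∫ τ in (0:ℝ)..(t/2), a ^ s * Real.exp (-((t - τ) * a)) * |f τ|)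
        ≤ ‖∫ τ in (0:ℝ)..(t/2), a ^ s * Real.exp (-((t - τ) * a)) * |f τ|‖ :=
          le_abs_self _
      _ ≤ t/2 * C := this
  -- Step 2: bound (t/2) * C by the RHS
  set K : ℝ := (4 * s / Real.exp 1) ^ s with hK_def
  set c₀ : ℝ := ((lam + 1) / (Real.exp 1 * (1/2))) ^ (lam + 1) with hc0_def
  have hK0 : 0 ≤ K := by positivity
  have hc00 : 0 ≤ c₀ := by positivity
  have e1pos := Real.exp_pos 1
  -- a^s e^{-(t/2)a} ≤ K e^{-t/4}
  have hAE : a ^ s * Real.exp (-(t/2 * a)) ≤ K * Real.exp (-(t/4)) := by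
    have hsplit : Real.exp (-(t/2 * a)) = Real.exp (-(t/4 * a)) * Real.exp (-(t/4 * a)) := by
      rw [← Real.exp_add]; ring_nf
    have h1 : a ^ s * Real.exp (-(t/4 * a)) ≤ (s / (Real.exp 1 * (t/4))) ^ s :=
      key_rpow_exp s (t/4) a hs (by linarith) ha0
    have h2 : (s / (Real.exp 1 * (t/4))) ^ s ≤ K := by
      rw [hK_def]
      apply Real.rpow_le_rpow (by positivity) _ hs.le
      rw [div_le_div_iff₀ (by positivity) e1pos]
      nlinarith [mul_nonneg (mul_nonneg hs.le e1pos.le) (by linarith : (0:ℝ) ≤ t - 1)]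
    have h3 : Real.exp (-(t/4 * a)) ≤ Real.exp (-(t/4)) := by
      apply Real.exp_le_exp.mpr
      nlinarith
    calc a ^ s * Real.exp (-(t/2 * a))
        = (a ^ s * Real.exp (-(t/4 * a))) * Real.exp (-(t/4 * a)) := by
          rw [hsplit]; ring
      _ ≤ K * Real.exp (-(t/4)) :=
          mul_le_mul (h1.trans h2) h3 (Real.exp_pos _).le hK0
  -- (t/2) e^{-t/4} ≤ e^{1/4} 2^lam c₀ (1+t)^{-lam}
  have hx0 : (0:ℝ) < 1 + t := by linarith
  have hxpow : (1+t) ^ (lam+1) * (1+t) ^ (-lam) = 1 + t := by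
    rw [← Real.rpow_add hx0, show lam + 1 + (-lam) = (1:ℝ) by ring, Real.rpow_one]
  have hc₁ : ((lam+1) / (Real.exp 1 * (1/4))) ^ (lam+1) = ((2:ℝ) ^ lam * 2) * c₀ := by
    have hb : (lam+1) / (Real.exp 1 * (1/4)) = 2 * ((lam+1) / (Real.exp 1 * (1/2))) := by
      field_simp
      ring
    rw [hb, Real.mul_rpow (by norm_num) (by positivity), hc0_def,
      Real.rpow_add two_pos, Real.rpow_one]
  have hkey2 : (1+t) ^ (lam+1) * Real.exp (-(1/4 * (1+t)))
      ≤ ((lam+1) / (Real.exp 1 * (1/4))) ^ (lam+1) :=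
    key_rpow_exp (lam+1) (1/4) (1+t) (by linarith) (by norm_num) hx0
  have hT : t/2 * Real.exp (-(t/4))
      ≤ Real.exp (1/4) * ((2:ℝ) ^ lam * c₀) * (1+t) ^ (-lam) := by
    have he : Real.exp (-(t/4)) = Real.exp (1/4) * Real.exp (-(1/4 * (1+t))) := by
      rw [← Real.exp_add]; ring_nf
    calc t/2 * Real.exp (-(t/4))
        ≤ (1+t)/2 * (Real.exp (1/4) * Real.exp (-(1/4 * (1+t)))) := by
          rw [← he]
          exact mul_le_mul_of_nonneg_right (by linarith) (Real.exp_pos _).le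
      _ = Real.exp (1/4)/2 * (((1+t) ^ (lam+1) * (1+t) ^ (-lam))
            * Real.exp (-(1/4 * (1+t)))) := by rw [hxpow]; ring
      _ = Real.exp (1/4)/2 * (((1+t) ^ (lam+1) * Real.exp (-(1/4 * (1+t))))
            * (1+t) ^ (-lam)) := by ring
      _ ≤ Real.exp (1/4)/2 * (((lam+1) / (Real.exp 1 * (1/4))) ^ (lam+1)
            * (1+t) ^ (-lam)) := by
          apply mul_le_mul_of_nonneg_left _ (by positivity)
          exact mul_le_mul_of_nonneg_right hkey2 (Real.rpow_nonneg hx0.le _)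
      _ = Real.exp (1/4) * ((2:ℝ) ^ lam * c₀) * (1+t) ^ (-lam) := by
          rw [hc₁]; ring
  -- final constant comparison
  have hP1 : (1:ℝ) ≤ (2:ℝ) ^ lam := Real.one_le_rpow (by norm_num) hlam.le
  have hP0 : (0:ℝ) ≤ (2:ℝ) ^ lam := by linarith
  have hE : Real.exp (-(1/4)) * Real.exp (1/2) = Real.exp (1/4) := by
    rw [← Real.exp_add]; norm_num
  have hconst : Real.exp (1/4) * ((2:ℝ) ^ lam * c₀)
      ≤ Real.exp (-(1/4)) * (2:ℝ) ^ lam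
        * ((2:ℝ) ^ lam * (c₀ * Real.exp (1/2) + 1/(1/2))) := by
    have h4 : (0:ℝ) ≤ Real.exp (-(1/4)) := (Real.exp_pos _).le
    have key : Real.exp (-(1/4)) * (2:ℝ) ^ lam
        * ((2:ℝ) ^ lam * (c₀ * Real.exp (1/2) + 1/(1/2)))
        = (2:ℝ) ^ lam * (2:ℝ) ^ lam * c₀ * Real.exp (1/4)
          + 2 * ((2:ℝ) ^ lam * (2:ℝ) ^ lam) * Real.exp (-(1/4)) := by
      rw [← hE]; ring
    rw [key]
    nlinarith [mul_nonneg (mul_nonneg (mul_nonneg (sub_nonneg.mpr hP1) hP0) hc00)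
      (Real.exp_pos (1/4)).le, mul_nonneg (mul_nonneg hP0 hP0) h4]
  refine step1.trans ?_
  have hrp : (0:ℝ) ≤ (1+t) ^ (-lam) := Real.rpow_nonneg hx0.le _
  calc t/2 * C = (a ^ s * Real.exp (-(t/2 * a))) * (t/2 * M) := by rw [hC_def]; ring
    _ ≤ (K * Real.exp (-(t/4))) * (t/2 * M) :=
        mul_le_mul_of_nonneg_right hAE (by positivity)
    _ = (M * K) * (t/2 * Real.exp (-(t/4))) := by ring
    _ ≤ (M * K) * (Real.exp (1/4) * ((2:ℝ) ^ lam * c₀) * (1+t) ^ (-lam)) :=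
        mul_le_mul_of_nonneg_left hT (by positivity)
    _ = (M * K) * (Real.exp (1/4) * ((2:ℝ) ^ lam * c₀)) * (1+t) ^ (-lam) := by ring
    _ ≤ (M * K) * (Real.exp (-(1/4)) * (2:ℝ) ^ lam
          * ((2:ℝ) ^ lam * (c₀ * Real.exp (1/2) + 1/(1/2)))) * (1+t) ^ (-lam) := by
        apply mul_le_mul_of_nonneg_right _ hrp
        exact mul_le_mul_of_nonneg_left hconst (by positivity)
    _ = M * K * Real.exp (-(1/4)) * (2:ℝ) ^ lam
          * ((2:ℝ) ^ lam * (c₀ * Real.exp (1/2) + 1/(1/2))) * (1+t) ^ (-lam) := by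
        ring
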